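/- For a ≥ 0 and b > −1, the function Φ_{a,b} is Lipschitz on [0,1]: there exists C* > 0 such that |Φ_{a,b}(θ) − Φ_{a,b}(θ̃)| ≤ C*·|θ − θ̃| for all θ, θ̃ ∈ [0,1]. -/

import Mathlib

open Set MeasureTheory intervalIntegral

/-- `Φ_{a,b}(θ) = ∫₀^θ ξ² (√(1+ξ²))^a (θ²−ξ²)^b (√(1+θ²)+√(1+ξ²))^{−b} dξ`. -/
noncomputable def PhiAB (a b θ : ℝ) : ℝ :=
  ∫ ξ in (0:ℝ)..θ, ξ ^ 2 * Real.sqrt (1 + ξ ^ 2) ^ a * (θ ^ 2 - ξ ^ 2) ^ b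
    / (Real.sqrt (1 + θ ^ 2) + Real.sqrt (1 + ξ ^ 2)) ^ b


/-- Lipschitz bound for `rpow` on a positive interval. -/
lemma abs_rpow_sub_rpow_le {p m M x y : ℝ} (hm : 0 < m)
    (hx : x ∈ Set.Icc m M) (hy : y ∈ Set.Icc m M) :
    |x ^ p - y ^ p| ≤ (|p| * max (m ^ (p - 1)) (M ^ (p - 1))) * |x - y| := by
  have hbound : ∀ z ∈ Set.Icc m M,
      ‖p * z ^ (p - 1)‖ ≤ |p| * max (m ^ (p - 1)) (M ^ (p - 1)) := by
    intro z hz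
    rw [norm_mul, Real.norm_eq_abs, Real.norm_eq_abs,
      abs_of_nonneg (Real.rpow_nonneg (le_trans hm.le hz.1) _)]
    refine mul_le_mul_of_nonneg_left ?_ (abs_nonneg p)
    rcases le_or_gt 0 (p - 1) with h | h
    · exact le_max_of_le_right (Real.rpow_le_rpow (le_trans hm.le hz.1) hz.2 h)
    · exact le_max_of_le_left (Real.rpow_le_rpow_of_nonpos hm hz.1 h.le)
  have hderiv : ∀ z ∈ Set.Icc m M,
      HasDerivWithinAt (fun w : ℝ => w ^ p) (p * z ^ (p - 1)) (Set.Icc m M) z := fun z hz =>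
    (Real.hasDerivAt_rpow_const (Or.inl (lt_of_lt_of_le hm hz.1).ne')).hasDerivWithinAt
  have := Convex.norm_image_sub_le_of_norm_hasDerivWithin_le hderiv hbound (convex_Icc m M) hy hx
  simpa [Real.norm_eq_abs] using this

/-- Lipschitz bound for `rpow` on `[0,1]` with exponent `≥ 1`. -/
lemma abs_rpow_sub_rpow_le01 {p x y : ℝ} (hp : 1 ≤ p)
    (hx : x ∈ Set.Icc (0:ℝ) 1) (hy : y ∈ Set.Icc (0:ℝ) 1) :
    |x ^ p - y ^ p| ≤ p * |x - y| := by
  have hbound : ∀ z ∈ Set.Icc (0:ℝ) 1, ‖p * z ^ (p - 1)‖ ≤ p := by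
    intro z hz
    rw [norm_mul, Real.norm_eq_abs, Real.norm_eq_abs,
      abs_of_nonneg (Real.rpow_nonneg hz.1 _), abs_of_nonneg (by linarith : (0:ℝ) ≤ p)]
    have h1 : z ^ (p - 1) ≤ 1 := Real.rpow_le_one hz.1 hz.2 (by linarith)
    have h2 : (0:ℝ) ≤ z ^ (p - 1) := Real.rpow_nonneg hz.1 _
    nlinarith
  have hderiv : ∀ z ∈ Set.Icc (0:ℝ) 1,
      HasDerivWithinAt (fun w : ℝ => w ^ p) (p * z ^ (p - 1)) (Set.Icc (0:ℝ) 1) z := fun z hz =>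
    (Real.hasDerivAt_rpow_const (Or.inr hp)).hasDerivWithinAt
  have := Convex.norm_image_sub_le_of_norm_hasDerivWithin_le hderiv hbound (convex_Icc 0 1) hy hx
  simpa [Real.norm_eq_abs] using this

/-- `x ↦ √(1+x²)` is 1-Lipschitz. -/
lemma abs_sqrt_one_add_sq_sub_le (x y : ℝ) :
    |Real.sqrt (1 + x ^ 2) - Real.sqrt (1 + y ^ 2)| ≤ |x - y| := by
  set u := Real.sqrt (1 + x ^ 2) with hu_def
  set v := Real.sqrt (1 + y ^ 2) with hv_def
  have hx2 : (0:ℝ) ≤ 1 + x ^ 2 := by positivity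
  have hy2 : (0:ℝ) ≤ 1 + y ^ 2 := by positivity
  have hu : 0 ≤ u := Real.sqrt_nonneg _
  have hv : 0 ≤ v := Real.sqrt_nonneg _
  have hu1 : 1 ≤ u := by
    have : Real.sqrt 1 ≤ u := Real.sqrt_le_sqrt (by nlinarith [sq_nonneg x])
    simpa using this
  have hv1 : 1 ≤ v := by
    have : Real.sqrt 1 ≤ v := Real.sqrt_le_sqrt (by nlinarith [sq_nonneg y])
    simpa using this
  have habsx : |x| ≤ u := by
    rw [← Real.sqrt_sq_eq_abs]; exact Real.sqrt_le_sqrt (by linarith)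
  have habsy : |y| ≤ v := by
    rw [← Real.sqrt_sq_eq_abs]; exact Real.sqrt_le_sqrt (by linarith)
  have hsum : (0:ℝ) < u + v := by linarith
  have h2 : u ^ 2 = 1 + x ^ 2 := Real.sq_sqrt hx2
  have h3 : v ^ 2 = 1 + y ^ 2 := Real.sq_sqrt hy2
  have key : |u - v| * (u + v) ≤ |x - y| * (u + v) := by
    calc |u - v| * (u + v) = |u - v| * |u + v| := by rw [abs_of_pos hsum]
      _ = |(u - v) * (u + v)| := (abs_mul _ _).symm
      _ = |u ^ 2 - v ^ 2| := by ring_nf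
      _ = |x ^ 2 - y ^ 2| := by rw [h2, h3]; ring_nf
      _ = |(x - y) * (x + y)| := by ring_nf
      _ = |x - y| * |x + y| := abs_mul _ _
      _ ≤ |x - y| * (u + v) := by
          refine mul_le_mul_of_nonneg_left ?_ (abs_nonneg _)
          calc |x + y| ≤ |x| + |y| := abs_add_le _ _
            _ ≤ u + v := add_le_add habsx habsy
  exact le_of_mul_le_mul_right key hsum

/-- integrability of `(1 - t²)^b` on `[0,1]` for `b > -1`. -/
lemma intervalIntegrable_one_sub_sq_rpow {b : ℝ} (hb : -1 < b) :
    IntervalIntegrable (fun t : ℝ => (1 - t ^ 2) ^ b) volume 0 1 := by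
  have hbase : IntervalIntegrable (fun t : ℝ => (1 - t) ^ b) volume 0 1 := by
    have h := (intervalIntegral.intervalIntegrable_rpow' (a := 0) (b := 1) hb).comp_sub_left 1
    simpa using h.symm
  have hdom : IntervalIntegrable (fun t : ℝ => max 1 ((2:ℝ) ^ b) * (1 - t) ^ b) volume 0 1 :=
    hbase.const_mul _
  apply hdom.mono_fun
  · have hm : Measurable (fun t : ℝ => (1 - t ^ 2) ^ b) := by measurability
    exact hm.aestronglyMeasurable
  · filter_upwards [MeasureTheory.ae_restrict_mem measurableSet_uIoc] with t ht
    rw [Set.uIoc_of_le (zero_le_one)] at ht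
    have h1 : (0:ℝ) ≤ 1 - t := by linarith [ht.2]
    have h2 : (0:ℝ) ≤ 1 + t := by linarith [ht.1]
    have key : (1 - t ^ 2) ^ b = (1 - t) ^ b * (1 + t) ^ b := by
      rw [← Real.mul_rpow h1 h2]; ring_nf
    have hle : (1 + t) ^ b ≤ max 1 ((2:ℝ) ^ b) := by
      rcases le_or_gt 0 b with h | h
      · exact le_max_of_le_right (Real.rpow_le_rpow h2 (by linarith [ht.2]) h)
      · exact le_max_of_le_left (Real.rpow_le_one_of_one_le_of_nonpos (by linarith [ht.1]) h.le)
    have hmax : (0:ℝ) ≤ max 1 ((2:ℝ) ^ b) := le_trans zero_le_one (le_max_left _ _)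
    rw [Real.norm_eq_abs, Real.norm_eq_abs, key,
      abs_of_nonneg (mul_nonneg (Real.rpow_nonneg h1 b) (Real.rpow_nonneg h2 b)),
      abs_of_nonneg (mul_nonneg hmax (Real.rpow_nonneg h1 b))]
    rw [mul_comm (max 1 ((2:ℝ) ^ b))]
    exact mul_le_mul_of_nonneg_left hle (Real.rpow_nonneg h1 b)



lemma phi_eq {a b : ℝ} (hb : -1 < b) {θ : ℝ} (hθ : θ ∈ Set.Icc (0:ℝ) 1) :
    PhiAB a b θ = θ ^ (3 + 2*b) *
      ∫ t in (0:ℝ)..1, t ^ 2 * Real.sqrt (1 + (θ*t) ^ 2) ^ a * (1 - t ^ 2) ^ b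
        / (Real.sqrt (1 + θ ^ 2) + Real.sqrt (1 + (θ*t) ^ 2)) ^ b := by
  rcases eq_or_lt_of_le hθ.1 with h0 | hpos
  · rw [← h0]
    rw [show PhiAB a b 0 = 0 by simp [PhiAB], Real.zero_rpow (by linarith : (3:ℝ) + 2*b ≠ 0)]
    ring
  · set f : ℝ → ℝ := fun ξ => ξ ^ 2 * Real.sqrt (1 + ξ ^ 2) ^ a * (θ ^ 2 - ξ ^ 2) ^ b
      / (Real.sqrt (1 + θ ^ 2) + Real.sqrt (1 + ξ ^ 2)) ^ b with hf
    have hθne : θ ≠ 0 := ne_of_gt hpos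
    have hcomp := intervalIntegral.integral_comp_mul_left (a := (0:ℝ)) (b := 1) f hθne
    rw [mul_zero, mul_one] at hcomp
    have key : PhiAB a b θ = θ * ∫ t in (0:ℝ)..1, f (θ * t) := by
      rw [show PhiAB a b θ = ∫ x in (0:ℝ)..θ, f x from rfl, hcomp, smul_eq_mul, ← mul_assoc,
        mul_inv_cancel₀ hθne, one_mul]
    rw [key]
    have hpow2 : ((θ:ℝ) ^ 2) ^ b = θ ^ (2*b) := by
      rw [show ((θ:ℝ) ^ 2) = θ ^ ((2:ℕ):ℝ) from (Real.rpow_natCast θ 2).symm,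
        ← Real.rpow_mul hθ.1]
      norm_num
    have hcongr : Set.EqOn (fun t => f (θ * t))
        (fun t => (θ ^ 2 * θ ^ (2*b)) * (t ^ 2 * Real.sqrt (1 + (θ*t) ^ 2) ^ a * (1 - t ^ 2) ^ b
          / (Real.sqrt (1 + θ ^ 2) + Real.sqrt (1 + (θ*t) ^ 2)) ^ b)) (Set.uIcc 0 1) := by
      intro t ht
      rw [Set.uIcc_of_le zero_le_one] at ht
      have h1t : (0:ℝ) ≤ 1 - t ^ 2 := by nlinarith [ht.1, ht.2]
      simp only [hf]
      rw [show θ ^ 2 - (θ * t) ^ 2 = θ ^ 2 * (1 - t ^ 2) by ring,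
        Real.mul_rpow (sq_nonneg θ) h1t, hpow2]
      ring
    rw [intervalIntegral.integral_congr hcongr, intervalIntegral.integral_const_mul]
    rw [← mul_assoc]
    congr 1
    have h2 : (θ:ℝ) ^ (2:ℕ) = θ ^ ((2:ℕ):ℝ) := (Real.rpow_natCast θ 2).symm
    calc θ * (θ ^ 2 * θ ^ (2*b)) = θ ^ (1:ℝ) * (θ ^ (((2:ℕ):ℝ)) * θ ^ (2*b)) := by
          rw [Real.rpow_one, ← h2]
      _ = θ ^ ((1:ℝ) + (((2:ℕ):ℝ) + 2*b)) := by
          rw [Real.rpow_add hpos, Real.rpow_add hpos]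
      _ = θ ^ (3 + 2*b) := by congr 1; push_cast; ring


noncomputable def Pab (a b θ t : ℝ) : ℝ :=
  Real.sqrt (1 + (θ*t) ^ 2) ^ a *
    (Real.sqrt (1 + θ ^ 2) + Real.sqrt (1 + (θ*t) ^ 2)) ^ (-b)

noncomputable def Bab (b : ℝ) : ℝ := max 1 ((2 * Real.sqrt 2) ^ (-b))
noncomputable def Maa (a : ℝ) : ℝ := Real.sqrt 2 ^ a
noncomputable def L1a (a : ℝ) : ℝ := |a| * max ((1:ℝ) ^ (a - 1)) (Real.sqrt 2 ^ (a - 1))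
noncomputable def L2b (b : ℝ) : ℝ := |(-b)| * max ((2:ℝ) ^ (-b - 1)) ((2 * Real.sqrt 2) ^ (-b - 1))
noncomputable def LPab (a b : ℝ) : ℝ := Maa a * (2 * L2b b) + Bab b * L1a a

lemma sq_mul_le_one {θ t : ℝ} (hθ : θ ∈ Set.Icc (0:ℝ) 1) (ht : t ∈ Set.Icc (0:ℝ) 1) :
    (θ * t) ^ 2 ≤ 1 := by
  have h0 : 0 ≤ θ * t := mul_nonneg hθ.1 ht.1
  have h1 : θ * t ≤ 1 := mul_le_one₀ hθ.2 ht.1 ht.2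
  nlinarith

lemma sqrt_one_add_sq_mem {x : ℝ} (hx : x ^ 2 ≤ 1) :
    Real.sqrt (1 + x ^ 2) ∈ Set.Icc (1:ℝ) (Real.sqrt 2) := by
  constructor
  · have h : Real.sqrt 1 ≤ Real.sqrt (1 + x ^ 2) := Real.sqrt_le_sqrt (by nlinarith [sq_nonneg x])
    simpa using h
  · exact Real.sqrt_le_sqrt (by nlinarith)

lemma sqrt2_ge_one : (1:ℝ) ≤ Real.sqrt 2 := by
  have h : Real.sqrt 1 ≤ Real.sqrt 2 := Real.sqrt_le_sqrt (by norm_num)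
  simpa using h

lemma Bab_nonneg (b : ℝ) : 0 ≤ Bab b := le_trans zero_le_one (le_max_left _ _)
lemma Maa_nonneg (a : ℝ) : 0 ≤ Maa a := Real.rpow_nonneg (Real.sqrt_nonneg 2) a
lemma L1a_nonneg (a : ℝ) : 0 ≤ L1a a :=
  mul_nonneg (abs_nonneg _) (le_trans (Real.rpow_nonneg zero_le_one _) (le_max_left _ _))
lemma L2b_nonneg (b : ℝ) : 0 ≤ L2b b :=
  mul_nonneg (abs_nonneg _) (le_trans (Real.rpow_nonneg zero_le_two _) (le_max_left _ _))
lemma LPab_nonneg (a b : ℝ) : 0 ≤ LPab a b :=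
  add_nonneg (mul_nonneg (Maa_nonneg a) (by nlinarith [L2b_nonneg b]))
    (mul_nonneg (Bab_nonneg b) (L1a_nonneg a))

lemma d_mem {θ t : ℝ} (hθ : θ ∈ Set.Icc (0:ℝ) 1) (ht : t ∈ Set.Icc (0:ℝ) 1) :
    Real.sqrt (1 + θ ^ 2) + Real.sqrt (1 + (θ*t) ^ 2) ∈ Set.Icc (2:ℝ) (2 * Real.sqrt 2) := by
  have h1 : (θ:ℝ) ^ 2 ≤ 1 := by nlinarith [hθ.1, hθ.2]
  have m1 := sqrt_one_add_sq_mem h1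
  have m2 := sqrt_one_add_sq_mem (sq_mul_le_one hθ ht)
  exact ⟨by linarith [m1.1, m2.1], by linarith [m1.2, m2.2]⟩

lemma P_nonneg (a b θ t : ℝ) : 0 ≤ Pab a b θ t :=
  mul_nonneg (Real.rpow_nonneg (Real.sqrt_nonneg _) _)
    (Real.rpow_nonneg (by positivity) _)

lemma dpow_le {b z : ℝ} (hz : z ∈ Set.Icc (2:ℝ) (2 * Real.sqrt 2)) : z ^ (-b) ≤ Bab b := by
  rcases le_or_gt 0 b with h | h
  · exact le_trans (Real.rpow_le_one_of_one_le_of_nonpos (by linarith [hz.1]) (by linarith))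
      (le_max_left _ _)
  · exact le_trans (Real.rpow_le_rpow (by linarith [hz.1]) hz.2 (by linarith))
      (le_max_right _ _)

lemma spow_le {a z : ℝ} (ha : 0 ≤ a) (hz : z ∈ Set.Icc (1:ℝ) (Real.sqrt 2)) :
    z ^ a ≤ Maa a :=
  Real.rpow_le_rpow (le_trans zero_le_one hz.1) hz.2 ha

lemma P_le {a b θ t : ℝ} (ha : 0 ≤ a) (hθ : θ ∈ Set.Icc (0:ℝ) 1) (ht : t ∈ Set.Icc (0:ℝ) 1) :
    Pab a b θ t ≤ Maa a * Bab b := by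
  have m2 := sqrt_one_add_sq_mem (sq_mul_le_one hθ ht)
  have hd := d_mem hθ ht
  exact mul_le_mul (spow_le ha m2) (dpow_le hd)
    (Real.rpow_nonneg (by positivity) _) (Maa_nonneg a)

lemma P_lip {a b θ θ' t : ℝ} (ha : 0 ≤ a) (hθ : θ ∈ Set.Icc (0:ℝ) 1)
    (hθ' : θ' ∈ Set.Icc (0:ℝ) 1) (ht : t ∈ Set.Icc (0:ℝ) 1) :
    |Pab a b θ t - Pab a b θ' t| ≤ LPab a b * |θ - θ'| := by
  set s : ℝ := Real.sqrt (1 + (θ*t) ^ 2) with hs_def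
  set s' : ℝ := Real.sqrt (1 + (θ'*t) ^ 2) with hs'_def
  set d : ℝ := Real.sqrt (1 + θ ^ 2) + Real.sqrt (1 + (θ*t) ^ 2) with hd_def
  set d' : ℝ := Real.sqrt (1 + θ' ^ 2) + Real.sqrt (1 + (θ'*t) ^ 2) with hd'_def
  have hs_mem : s ∈ Set.Icc (1:ℝ) (Real.sqrt 2) := sqrt_one_add_sq_mem (sq_mul_le_one hθ ht)
  have hs'_mem : s' ∈ Set.Icc (1:ℝ) (Real.sqrt 2) := sqrt_one_add_sq_mem (sq_mul_le_one hθ' ht)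
  have hd_mem : d ∈ Set.Icc (2:ℝ) (2 * Real.sqrt 2) := d_mem hθ ht
  have hd'_mem : d' ∈ Set.Icc (2:ℝ) (2 * Real.sqrt 2) := d_mem hθ' ht
  have habs_t : |t| ≤ 1 := abs_le.2 ⟨by linarith [ht.1], ht.2⟩
  have hss' : |s - s'| ≤ |θ - θ'| := by
    calc |s - s'| ≤ |θ*t - θ'*t| := abs_sqrt_one_add_sq_sub_le (θ*t) (θ'*t)
      _ = |θ - θ'| * |t| := by rw [← abs_mul]; ring_nf
      _ ≤ |θ - θ'| * 1 := mul_le_mul_of_nonneg_left habs_t (abs_nonneg _)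
      _ = |θ - θ'| := mul_one _
  have hdd' : |d - d'| ≤ 2 * |θ - θ'| := by
    have h1 : |Real.sqrt (1 + θ ^ 2) - Real.sqrt (1 + θ' ^ 2)| ≤ |θ - θ'| :=
      abs_sqrt_one_add_sq_sub_le θ θ'
    have e : d - d' = (Real.sqrt (1 + θ ^ 2) - Real.sqrt (1 + θ' ^ 2)) + (s - s') := by
      rw [hd_def, hd'_def, hs_def, hs'_def]; ring
    calc |d - d'| = |(Real.sqrt (1 + θ ^ 2) - Real.sqrt (1 + θ' ^ 2)) + (s - s')| := by
          rw [e]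
      _ ≤ |Real.sqrt (1 + θ ^ 2) - Real.sqrt (1 + θ' ^ 2)| + |s - s'| := abs_add_le _ _
      _ ≤ 2 * |θ - θ'| := by linarith
  have hF1 : |s ^ a - s' ^ a| ≤ L1a a * |θ - θ'| := by
    calc |s ^ a - s' ^ a| ≤ L1a a * |s - s'| :=
          abs_rpow_sub_rpow_le zero_lt_one hs_mem hs'_mem
      _ ≤ L1a a * |θ - θ'| := mul_le_mul_of_nonneg_left hss' (L1a_nonneg a)
  have hF2 : |d ^ (-b) - d' ^ (-b)| ≤ L2b b * (2 * |θ - θ'|) := by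
    calc |d ^ (-b) - d' ^ (-b)| ≤ L2b b * |d - d'| :=
          abs_rpow_sub_rpow_le zero_lt_two hd_mem hd'_mem
      _ ≤ L2b b * (2 * |θ - θ'|) := mul_le_mul_of_nonneg_left hdd' (L2b_nonneg b)
  have hsa : |s ^ a| ≤ Maa a := by
    rw [abs_of_nonneg (Real.rpow_nonneg (by linarith [hs_mem.1]) a)]
    exact spow_le ha hs_mem
  have hdb : |d' ^ (-b)| ≤ Bab b := by
    rw [abs_of_nonneg (Real.rpow_nonneg (by linarith [hd'_mem.1]) _)]
    exact dpow_le hd'_mem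
  calc |Pab a b θ t - Pab a b θ' t|
      = |s ^ a * (d ^ (-b) - d' ^ (-b)) + (s ^ a - s' ^ a) * d' ^ (-b)| := by
        have e : Pab a b θ t - Pab a b θ' t
            = s ^ a * (d ^ (-b) - d' ^ (-b)) + (s ^ a - s' ^ a) * d' ^ (-b) := by
          rw [Pab, Pab, ← hs_def, ← hs'_def, ← hd_def, ← hd'_def]; ring
        rw [e]
    _ ≤ |s ^ a * (d ^ (-b) - d' ^ (-b))| + |(s ^ a - s' ^ a) * d' ^ (-b)| := abs_add_le _ _
    _ = |s ^ a| * |d ^ (-b) - d' ^ (-b)| + |s ^ a - s' ^ a| * |d' ^ (-b)| := by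
        rw [abs_mul, abs_mul]
    _ ≤ Maa a * (L2b b * (2 * |θ - θ'|)) + (L1a a * |θ - θ'|) * Bab b := by
        refine add_le_add (mul_le_mul hsa hF2 (abs_nonneg _) (Maa_nonneg a))
          (mul_le_mul hF1 hdb (abs_nonneg _) ?_)
        exact mul_nonneg (L1a_nonneg a) (abs_nonneg _)
    _ = LPab a b * |θ - θ'| := by rw [LPab]; ring

noncomputable def Gab (a b θ t : ℝ) : ℝ :=
  t ^ 2 * Real.sqrt (1 + (θ*t) ^ 2) ^ a * (1 - t ^ 2) ^ b
    / (Real.sqrt (1 + θ ^ 2) + Real.sqrt (1 + (θ*t) ^ 2)) ^ b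

noncomputable def Hab (a b θ : ℝ) : ℝ := ∫ t in (0:ℝ)..1, Gab a b θ t

noncomputable def Jb (b : ℝ) : ℝ := ∫ t in (0:ℝ)..1, (1 - t ^ 2) ^ b

lemma Jb_nonneg (b : ℝ) : 0 ≤ Jb b := by
  refine intervalIntegral.integral_nonneg zero_le_one (fun u hu => ?_)
  exact Real.rpow_nonneg (by nlinarith [hu.1, hu.2]) b

lemma Gab_eq (a b θ t : ℝ) : Gab a b θ t = t ^ 2 * (1 - t ^ 2) ^ b * Pab a b θ t := by
  have hd : (0:ℝ) < Real.sqrt (1 + θ ^ 2) + Real.sqrt (1 + (θ*t) ^ 2) := by positivity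
  rw [Gab, Pab, Real.rpow_neg hd.le]; ring

lemma Gab_measurable (a b θ : ℝ) : Measurable (fun t => Gab a b θ t) := by
  have m1 : Measurable fun t : ℝ => t ^ 2 := by measurability
  have c2 : Continuous fun t : ℝ => Real.sqrt (1 + (θ*t) ^ 2) ^ a := by
    apply Continuous.rpow_const
    · continuity
    · intro t; left; positivity
  have m3 : Measurable fun t : ℝ => (1 - t ^ 2) ^ b := by measurability
  have c4 : Continuous fun t : ℝ =>
      (Real.sqrt (1 + θ ^ 2) + Real.sqrt (1 + (θ*t) ^ 2)) ^ b := by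
    apply Continuous.rpow_const
    · continuity
    · intro t; left; positivity
  exact ((m1.mul c2.measurable).mul m3).div c4.measurable

lemma Gab_abs_le {a b θ : ℝ} (ha : 0 ≤ a) (hθ : θ ∈ Set.Icc (0:ℝ) 1)
    {t : ℝ} (ht : t ∈ Set.Ioc (0:ℝ) 1) :
    |Gab a b θ t| ≤ (Maa a * Bab b) * (1 - t ^ 2) ^ b := by
  have ht' : t ∈ Set.Icc (0:ℝ) 1 := ⟨ht.1.le, ht.2⟩
  have h1t : (0:ℝ) ≤ 1 - t ^ 2 := by nlinarith [ht'.1, ht'.2]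
  have ht2 : t ^ 2 ≤ 1 := by nlinarith [ht'.1, ht'.2]
  have hr : (0:ℝ) ≤ (1 - t ^ 2) ^ b := Real.rpow_nonneg h1t b
  rw [Gab_eq, abs_mul, abs_mul, abs_of_nonneg (sq_nonneg t), abs_of_nonneg hr,
    abs_of_nonneg (P_nonneg a b θ t)]
  calc t ^ 2 * (1 - t ^ 2) ^ b * Pab a b θ t
      ≤ (1 - t ^ 2) ^ b * (Maa a * Bab b) := by
        refine mul_le_mul (mul_le_of_le_one_left hr ht2) (P_le ha hθ ht')
          (P_nonneg a b θ t) hr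
    _ = (Maa a * Bab b) * (1 - t ^ 2) ^ b := mul_comm _ _

lemma Gab_sub_abs_le {a b θ θ' : ℝ} (ha : 0 ≤ a) (hθ : θ ∈ Set.Icc (0:ℝ) 1)
    (hθ' : θ' ∈ Set.Icc (0:ℝ) 1) {t : ℝ} (ht : t ∈ Set.Ioc (0:ℝ) 1) :
    |Gab a b θ t - Gab a b θ' t| ≤ (LPab a b * |θ - θ'|) * (1 - t ^ 2) ^ b := by
  have ht' : t ∈ Set.Icc (0:ℝ) 1 := ⟨ht.1.le, ht.2⟩
  have h1t : (0:ℝ) ≤ 1 - t ^ 2 := by nlinarith [ht'.1, ht'.2]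
  have ht2 : t ^ 2 ≤ 1 := by nlinarith [ht'.1, ht'.2]
  have hr : (0:ℝ) ≤ (1 - t ^ 2) ^ b := Real.rpow_nonneg h1t b
  have e : Gab a b θ t - Gab a b θ' t
      = t ^ 2 * (1 - t ^ 2) ^ b * (Pab a b θ t - Pab a b θ' t) := by
    rw [Gab_eq, Gab_eq]; ring
  rw [e, abs_mul, abs_mul, abs_of_nonneg (sq_nonneg t), abs_of_nonneg hr]
  calc t ^ 2 * (1 - t ^ 2) ^ b * |Pab a b θ t - Pab a b θ' t|
      ≤ (1 - t ^ 2) ^ b * (LPab a b * |θ - θ'|) := by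
        refine mul_le_mul (mul_le_of_le_one_left hr ht2) (P_lip ha hθ hθ' ht')
          (abs_nonneg _) hr
    _ = (LPab a b * |θ - θ'|) * (1 - t ^ 2) ^ b := mul_comm _ _

lemma Gab_intervalIntegrable {a b θ : ℝ} (ha : 0 ≤ a) (hb : -1 < b)
    (hθ : θ ∈ Set.Icc (0:ℝ) 1) :
    IntervalIntegrable (fun t => Gab a b θ t) volume 0 1 := by
  refine ((intervalIntegrable_one_sub_sq_rpow hb).const_mul (Maa a * Bab b)).mono_fun
    (Gab_measurable a b θ).aestronglyMeasurable ?_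
  filter_upwards [MeasureTheory.ae_restrict_mem measurableSet_uIoc] with t ht
  rw [Set.uIoc_of_le zero_le_one] at ht
  have h1t : (0:ℝ) ≤ 1 - t ^ 2 := by nlinarith [ht.1, ht.2]
  rw [Real.norm_eq_abs, Real.norm_eq_abs,
    abs_of_nonneg (mul_nonneg (mul_nonneg (Maa_nonneg a) (Bab_nonneg b))
      (Real.rpow_nonneg h1t b))]
  exact Gab_abs_le ha hθ ht

lemma Hab_abs_le {a b θ : ℝ} (ha : 0 ≤ a) (hb : -1 < b) (hθ : θ ∈ Set.Icc (0:ℝ) 1) :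
    |Hab a b θ| ≤ (Maa a * Bab b) * Jb b := by
  have h := intervalIntegral.norm_integral_le_abs_of_norm_le
    (f := fun t => Gab a b θ t) (g := fun t => (Maa a * Bab b) * (1 - t ^ 2) ^ b)
    (μ := volume) (a := (0:ℝ)) (b := 1) ?_
    ((intervalIntegrable_one_sub_sq_rpow hb).const_mul _)
  · rw [Real.norm_eq_abs] at h
    refine h.trans ?_
    rw [intervalIntegral.integral_const_mul,
      show (∫ x in (0:ℝ)..1, (1 - x ^ 2) ^ b) = Jb b from rfl,
      abs_of_nonneg (mul_nonneg (mul_nonneg (Maa_nonneg a) (Bab_nonneg b)) (Jb_nonneg b))]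
  · filter_upwards [MeasureTheory.ae_restrict_mem measurableSet_uIoc] with t ht
    rw [Set.uIoc_of_le zero_le_one] at ht
    rw [Real.norm_eq_abs]
    exact Gab_abs_le ha hθ ht

lemma Hab_lip {a b θ θ' : ℝ} (ha : 0 ≤ a) (hb : -1 < b) (hθ : θ ∈ Set.Icc (0:ℝ) 1)
    (hθ' : θ' ∈ Set.Icc (0:ℝ) 1) :
    |Hab a b θ - Hab a b θ'| ≤ (LPab a b * Jb b) * |θ - θ'| := by
  have hsub : Hab a b θ - Hab a b θ'
      = ∫ t in (0:ℝ)..1, (Gab a b θ t - Gab a b θ' t) := by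
    rw [Hab, Hab, intervalIntegral.integral_sub (Gab_intervalIntegrable ha hb hθ)
      (Gab_intervalIntegrable ha hb hθ')]
  rw [hsub]
  have h := intervalIntegral.norm_integral_le_abs_of_norm_le
    (f := fun t => Gab a b θ t - Gab a b θ' t)
    (g := fun t => (LPab a b * |θ - θ'|) * (1 - t ^ 2) ^ b)
    (μ := volume) (a := (0:ℝ)) (b := 1) ?_
    ((intervalIntegrable_one_sub_sq_rpow hb).const_mul _)
  · rw [Real.norm_eq_abs] at h
    refine h.trans ?_
    rw [intervalIntegral.integral_const_mul,
      show (∫ x in (0:ℝ)..1, (1 - x ^ 2) ^ b) = Jb b from rfl,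
      abs_of_nonneg (mul_nonneg (mul_nonneg (LPab_nonneg a b) (abs_nonneg _)) (Jb_nonneg b))]
    nlinarith [Jb_nonneg b, LPab_nonneg a b, abs_nonneg (θ - θ')]
  · filter_upwards [MeasureTheory.ae_restrict_mem measurableSet_uIoc] with t ht
    rw [Set.uIoc_of_le zero_le_one] at ht
    rw [Real.norm_eq_abs]
    exact Gab_sub_abs_le ha hθ hθ' ht

/-- `Φ_{a,b}` is Lipschitz on `[0,1]`. -/
theorem stmt_7 (a b : ℝ) (ha : 0 ≤ a) (hb : -1 < b) :
    ∃ C : ℝ, 0 < C ∧ ∀ θ ∈ Set.Icc (0:ℝ) 1, ∀ θ' ∈ Set.Icc (0:ℝ) 1,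
      |PhiAB a b θ - PhiAB a b θ'| ≤ C * |θ - θ'| := by
  set C : ℝ := (3 + 2*b) * ((Maa a * Bab b) * Jb b) + LPab a b * Jb b + 1 with hC_def
  have hM : 0 ≤ (Maa a * Bab b) * Jb b :=
    mul_nonneg (mul_nonneg (Maa_nonneg a) (Bab_nonneg b)) (Jb_nonneg b)
  have hL : 0 ≤ LPab a b * Jb b := mul_nonneg (LPab_nonneg a b) (Jb_nonneg b)
  have hp1 : (1:ℝ) ≤ 3 + 2*b := by linarith
  refine ⟨C, by nlinarith, ?_⟩
  intro θ hθ θ' hθ'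
  have hphi : PhiAB a b θ = θ ^ (3 + 2*b) * Hab a b θ := phi_eq hb hθ
  have hphi' : PhiAB a b θ' = θ' ^ (3 + 2*b) * Hab a b θ' := phi_eq hb hθ'
  rw [hphi, hphi']
  have hdecomp : θ ^ (3 + 2*b) * Hab a b θ - θ' ^ (3 + 2*b) * Hab a b θ'
      = (θ ^ (3 + 2*b) - θ' ^ (3 + 2*b)) * Hab a b θ
        + θ' ^ (3 + 2*b) * (Hab a b θ - Hab a b θ') := by ring
  have h1 : |θ ^ (3 + 2*b) - θ' ^ (3 + 2*b)| ≤ (3 + 2*b) * |θ - θ'| :=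
    abs_rpow_sub_rpow_le01 hp1 hθ hθ'
  have h2 : |Hab a b θ| ≤ (Maa a * Bab b) * Jb b := Hab_abs_le ha hb hθ
  have h3 : |θ' ^ (3 + 2*b)| ≤ 1 := by
    rw [abs_of_nonneg (Real.rpow_nonneg hθ'.1 _)]
    exact Real.rpow_le_one hθ'.1 hθ'.2 (by linarith)
  have h4 : |Hab a b θ - Hab a b θ'| ≤ (LPab a b * Jb b) * |θ - θ'| :=
    Hab_lip ha hb hθ hθ'
  calc |θ ^ (3 + 2*b) * Hab a b θ - θ' ^ (3 + 2*b) * Hab a b θ'|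
      ≤ |θ ^ (3 + 2*b) - θ' ^ (3 + 2*b)| * |Hab a b θ|
        + |θ' ^ (3 + 2*b)| * |Hab a b θ - Hab a b θ'| := by
        rw [hdecomp]
        refine (abs_add_le _ _).trans ?_
        rw [abs_mul, abs_mul]
    _ ≤ ((3 + 2*b) * |θ - θ'|) * ((Maa a * Bab b) * Jb b)
        + 1 * ((LPab a b * Jb b) * |θ - θ'|) := by
        refine add_le_add (mul_le_mul h1 h2 (abs_nonneg _) ?_)
          (mul_le_mul h3 h4 (abs_nonneg _) zero_le_one)
        exact mul_nonneg (by linarith) (abs_nonneg _)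
    _ ≤ C * |θ - θ'| := by
        rw [hC_def]
        nlinarith [abs_nonneg (θ - θ')]
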